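/- Let Δ₀ denote the subcategory of the simplex category Δ with all objects and those monotone maps f with f(0) = 0 (note that every epimorphism of Δ lies in Δ₀). Then for every functor X : Δ₀ᵒᵖ ⥤ SSet into simplicial sets and every n ≥ 0, the n-th latching map Lₙ(X) ⟶ X([n]) is a monomorphism of simplicial sets. In particular, every Δ₀ᵒᵖ-shaped diagram of simplicial sets is Reedy cofibrant with respect to the Kan–Quillen model structure on simplicial sets, in which the cofibrations are the monomorphisms. -/

import Mathlib

open CategoryTheory CategoryTheory.Limits Opposite

/-- The subcategory `Δ₀` of the simplex category `Δ` with the same objects and those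
monotone maps `f` with `f 0 = 0`. -/
structure Delta0 : Type where
  toObj : SimplexCategory

instance : Category.{0} Delta0 where
  Hom a b := { f : a.toObj ⟶ b.toObj // f.toOrderHom 0 = 0 }
  id a := ⟨𝟙 a.toObj, rfl⟩
  comp f g := ⟨f.1 ≫ g.1, by
    simp only [SimplexCategory.comp_toOrderHom, OrderHom.comp_coe, Function.comp_apply, f.2, g.2]⟩

/-- The index category for the `n`-th latching object: its objects are the non-identity
epimorphisms `α : [n] ↠ [k]` of `Δ` (all of which lie in `Δ₀`), and a morphism `α ⟶ α′`
is an epimorphism `φ : [k′] ↠ [k]` with `α′ ≫ φ = α` (i.e. the opposite of the category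
whose morphisms `α → α′` are the epimorphisms `φ` with `φ ∘ α = α′`, so that the diagram
below is covariant). -/
structure LatchingIndex (n : Delta0) : Type where
  k : Delta0
  π : n ⟶ k
  epi : Epi π.1
  not_identity : ¬ IsIso π.1

instance (n : Delta0) : Category.{0} (LatchingIndex n) where
  Hom a b := { φ : b.k ⟶ a.k // b.π ≫ φ = a.π ∧ Epi φ.1 }
  id a := ⟨𝟙 a.k, by simp, show Epi (𝟙 a.k.toObj) from inferInstance⟩
  comp {a b c} f g := ⟨g.1 ≫ f.1, by
      rw [← Category.assoc, g.2.1, f.2.1],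
    by
      haveI := g.2.2
      haveI := f.2.2
      exact epi_comp _ _⟩

/-- The latching diagram of a `Δ₀ᵒᵖ`-shaped diagram of simplicial sets at `[n]`,
sending a non-identity epimorphism `α : [n] ↠ [k]` to `X [k]`. -/
def latchingDiagram (X : Delta0ᵒᵖ ⥤ SSet) (n : Delta0) : LatchingIndex n ⥤ SSet where
  obj a := X.obj (op a.k)
  map f := X.map f.1.op
  map_id a := by
    show X.map (𝟙 a.k).op = _
    rw [op_id, X.map_id]
  map_comp {a b c} f g := by
    show X.map (g.1 ≫ f.1).op = _
    rw [op_comp, X.map_comp]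

/-- The cocone on the latching diagram with vertex `X [n]`, whose components are the maps
`X α : X [k] ⟶ X [n]`; the canonical map out of the colimit is the latching map. -/
def latchingCocone (X : Delta0ᵒᵖ ⥤ SSet) (n : Delta0) : Cocone (latchingDiagram X n) where
  pt := X.obj (op n)
  ι :=
    { app := fun a => X.map a.π.op
      naturality := fun a b f => by
        dsimp [latchingDiagram]
        rw [← X.map_comp, ← op_comp, f.2.1, Category.comp_id] }


namespace EZAux

open SimplexCategory

universe u

lemma hom_ext {a b : Delta0} {f g : a ⟶ b} (h : f.1 = g.1) : f = g := Subtype.ext h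

lemma comp_val {a b c : Delta0} (f : a ⟶ b) (g : b ⟶ c) : (f ≫ g).1 = f.1 ≫ g.1 := rfl

lemma id_val (a : Delta0) : (𝟙 a : a ⟶ a).1 = 𝟙 a.toObj := rfl

lemma delta0_ext {a b : Delta0} (h : a.toObj = b.toObj) : a = b := by
  cases a; cases b; cases h; rfl

lemma surj_zero {a b : SimplexCategory} (f : a ⟶ b)
    (hf : Function.Surjective f.toOrderHom) : f.toOrderHom 0 = 0 := by
  obtain ⟨i, hi⟩ := hf 0
  refine le_antisymm ?_ (Fin.zero_le _)
  rw [← hi]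
  exact f.toOrderHom.monotone (Fin.zero_le i)

section Sections

variable {a b : SimplexCategory} (f : a ⟶ b) (hf : Function.Surjective f.toOrderHom)

/-- minimal element whose image is at least `j` -/
noncomputable def lo (j : Fin (b.len + 1)) : Fin (a.len + 1) :=
  (Finset.univ.filter fun i => j ≤ f.toOrderHom i).min'
    (by obtain ⟨i, hi⟩ := hf j; exact ⟨i, by simp [hi]⟩)

lemma le_f_lo (j : Fin (b.len + 1)) : j ≤ f.toOrderHom (lo f hf j) := by
  have := (Finset.univ.filter fun i => j ≤ f.toOrderHom i).min'_mem
    (by obtain ⟨i, hi⟩ := hf j; exact ⟨i, by simp [hi]⟩)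
  simpa [lo] using this

lemma lo_le (j : Fin (b.len + 1)) {i} (h : j ≤ f.toOrderHom i) : lo f hf j ≤ i :=
  Finset.min'_le _ _ (by simp [h])

lemma f_lo (j : Fin (b.len + 1)) : f.toOrderHom (lo f hf j) = j := by
  obtain ⟨i, hi⟩ := hf j
  refine le_antisymm ?_ (le_f_lo f hf j)
  have h2 : lo f hf j ≤ i := lo_le f hf j (i := i) (by rw [hi])
  calc f.toOrderHom (lo f hf j) ≤ f.toOrderHom i := f.toOrderHom.monotone h2
  _ = j := hi

lemma lo_mono : Monotone (lo f hf) := by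
  intro j j' h
  exact Finset.min'_le _ _ (by simpa using le_trans h (le_f_lo f hf j'))

lemma lo_zero : lo f hf 0 = 0 :=
  le_antisymm (lo_le f hf 0 (Fin.zero_le _)) (Fin.zero_le _)

/-- maximal element whose image is at most `j` -/
noncomputable def hi (j : Fin (b.len + 1)) : Fin (a.len + 1) :=
  (Finset.univ.filter fun i => f.toOrderHom i ≤ j).max'
    (by obtain ⟨i, hi⟩ := hf j; exact ⟨i, by simp [hi]⟩)

lemma f_hi_le (j : Fin (b.len + 1)) : f.toOrderHom (hi f hf j) ≤ j := by
  have := (Finset.univ.filter fun i => f.toOrderHom i ≤ j).max'_mem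
    (by obtain ⟨i, hi⟩ := hf j; exact ⟨i, by simp [hi]⟩)
  simpa [hi] using this

lemma le_hi (j : Fin (b.len + 1)) {i} (h : f.toOrderHom i ≤ j) : i ≤ hi f hf j :=
  Finset.le_max' _ _ (by simp [h])

lemma f_hi (j : Fin (b.len + 1)) : f.toOrderHom (hi f hf j) = j := by
  obtain ⟨i, hij⟩ := hf j
  refine le_antisymm (f_hi_le f hf j) ?_
  have h2 : i ≤ hi f hf j := le_hi f hf j (i := i) (by rw [hij])
  calc j = f.toOrderHom i := hij.symm
  _ ≤ f.toOrderHom (hi f hf j) := f.toOrderHom.monotone h2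

lemma hi_mono : Monotone (hi f hf) := by
  intro j j' h
  exact le_hi f hf j' (le_trans (f_hi_le f hf j) h)

/-- the minimal section of a surjective map -/
noncomputable def minSec : b ⟶ a := SimplexCategory.Hom.mk ⟨lo f hf, lo_mono f hf⟩

lemma minSec_comp : minSec f hf ≫ f = 𝟙 b := by
  apply SimplexCategory.Hom.ext'
  apply OrderHom.ext
  funext j
  simp [minSec, SimplexCategory.comp_toOrderHom, SimplexCategory.Hom.toOrderHom_mk,
    SimplexCategory.id_toOrderHom, f_lo f hf]

lemma minSec_zero : (minSec f hf).toOrderHom 0 = 0 := by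
  simp [minSec, SimplexCategory.Hom.toOrderHom_mk, lo_zero f hf]

/-- a section of a surjective map through a chosen point `i` with positive image -/
noncomputable def midSec (i : Fin (a.len + 1)) (hi0 : f.toOrderHom i ≠ 0) : b ⟶ a :=
  SimplexCategory.Hom.mk
    { toFun := fun j => if j = 0 then 0 else if j = f.toOrderHom i then i else hi f hf j
      monotone' := by
        intro j j' hjj'
        dsimp only
        by_cases h0 : j = 0
        · simp only [h0, if_pos rfl]
          exact Fin.zero_le _
        · have h0' : j' ≠ 0 := by
            intro hc
            exact h0 (le_antisymm (hc ▸ hjj') (Fin.zero_le _))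
          rw [if_neg h0, if_neg h0']
          by_cases hj : j = f.toOrderHom i
          · rw [if_pos hj]
            by_cases hj' : j' = f.toOrderHom i
            · rw [if_pos hj']
            · rw [if_neg hj']
              exact le_hi f hf j' (hj ▸ hjj')
          · rw [if_neg hj]
            by_cases hj' : j' = f.toOrderHom i
            · rw [if_pos hj']
              have hlt : j < f.toOrderHom i := lt_of_le_of_ne (hj' ▸ hjj') hj
              by_contra hcon
              push_neg at hcon
              have h5 := f.toOrderHom.monotone hcon.le
              rw [f_hi f hf j] at h5
              exact absurd (lt_of_le_of_lt h5 hlt) (lt_irrefl _)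
            · rw [if_neg hj']
              exact hi_mono f hf hjj' }

lemma midSec_comp (i : Fin (a.len + 1)) (hi0 : f.toOrderHom i ≠ 0) (hz : f.toOrderHom 0 = 0) :
    midSec f hf i hi0 ≫ f = 𝟙 b := by
  apply SimplexCategory.Hom.ext'
  apply OrderHom.ext
  funext j
  simp only [midSec, SimplexCategory.comp_toOrderHom, SimplexCategory.Hom.toOrderHom_mk,
    OrderHom.comp_coe, Function.comp_apply, OrderHom.coe_mk, SimplexCategory.id_toOrderHom,
    OrderHom.id_coe, id_eq]
  show f.toOrderHom (if j = 0 then 0 else if j = f.toOrderHom i then i else hi f hf j) = j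
  by_cases h0 : j = 0
  · rw [if_pos h0, hz, h0]
  · rw [if_neg h0]
    by_cases hj : j = f.toOrderHom i
    · rw [if_pos hj, hj]
    · rw [if_neg hj, f_hi f hf j]

lemma midSec_at (i : Fin (a.len + 1)) (hi0 : f.toOrderHom i ≠ 0) :
    (midSec f hf i hi0).toOrderHom (f.toOrderHom i) = i := by
  simp [midSec, SimplexCategory.Hom.toOrderHom_mk, hi0]
  show (if f.toOrderHom i = 0 then (0 : Fin (a.len + 1)) else
    if f.toOrderHom i = f.toOrderHom i then i else hi f hf (f.toOrderHom i)) = i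
  rw [if_neg hi0, if_pos rfl]

lemma midSec_zero (i : Fin (a.len + 1)) (hi0 : f.toOrderHom i ≠ 0) :
    (midSec f hf i hi0).toOrderHom 0 = 0 := by
  simp [midSec, SimplexCategory.Hom.toOrderHom_mk]
  show (if (0 : Fin (b.len + 1)) = 0 then (0 : Fin (a.len + 1)) else
    if (0 : Fin (b.len + 1)) = f.toOrderHom i then i else hi f hf 0) = 0
  rw [if_pos rfl]

end Sections

section Delta0Sections

variable {p q : Delta0} (α : p ⟶ q) (hα : Function.Surjective α.1.toOrderHom)

/-- the minimal section, as a morphism of `Δ₀` -/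
noncomputable def sec : q ⟶ p := ⟨minSec α.1 hα, minSec_zero α.1 hα⟩

lemma sec_comp : sec α hα ≫ α = 𝟙 q := hom_ext (minSec_comp α.1 hα)

/-- a section through a chosen point, as a morphism of `Δ₀` -/
noncomputable def secThru (i) (hi0 : α.1.toOrderHom i ≠ 0) : q ⟶ p :=
  ⟨midSec α.1 hα i hi0, midSec_zero α.1 hα i hi0⟩

lemma secThru_comp (i) (hi0 : α.1.toOrderHom i ≠ 0) : secThru α hα i hi0 ≫ α = 𝟙 q :=
  hom_ext (midSec_comp α.1 hα i hi0 α.2)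

lemma secThru_at (i) (hi0 : α.1.toOrderHom i ≠ 0) :
    (secThru α hα i hi0).1.toOrderHom (α.1.toOrderHom i) = i :=
  midSec_at α.1 hα i hi0

end Delta0Sections

lemma isIso_of_epi_of_le {a b : SimplexCategory} (f : a ⟶ b) (hf : Epi f) (h : a.len ≤ b.len) :
    IsIso f := by
  have hab : a = b := SimplexCategory.ext (le_antisymm h (@SimplexCategory.len_le_of_epi _ _ f hf))
  subst hab
  haveI := hf
  rw [SimplexCategory.eq_id_of_epi f]
  infer_instance

lemma len_lt_of_epi_not_iso {a b : SimplexCategory} (f : a ⟶ b) (hf : Epi f) (h : ¬ IsIso f) :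
    b.len < a.len :=
  lt_of_le_of_ne (@SimplexCategory.len_le_of_epi _ _ f hf)
    (fun he => h (isIso_of_epi_of_le f hf (le_of_eq he.symm)))

section Presheaf

variable (Y : Delta0ᵒᵖ ⥤ Type u)

/-- nondegeneracy of an element of a presheaf on `Δ₀` -/
def IsND {o : Delta0} (x : Y.obj (op o)) : Prop :=
  ∀ (o' : Delta0) (e : o ⟶ o'), Epi e.1 → ¬ IsIso e.1 → ∀ w : Y.obj (op o'), x ≠ Y.map e.op w

lemma mono_of_nd {o o' : Delta0} {x : Y.obj (op o)} (hx : IsND Y x) (f : o ⟶ o')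
    {w : Y.obj (op o')} (h : x = Y.map f.op w) : Mono f.1 := by
  have hez : (factorThruImage f.1).toOrderHom 0 = 0 :=
    surj_zero _ (SimplexCategory.epi_iff_surjective.mp inferInstance)
  let e : o ⟶ (⟨image f.1⟩ : Delta0) := ⟨factorThruImage f.1, hez⟩
  have hmz : (image.ι f.1).toOrderHom 0 = 0 := by
    have h1 : (factorThruImage f.1 ≫ image.ι f.1).toOrderHom 0 = 0 := by
      rw [image.fac f.1]; exact f.2
    rw [SimplexCategory.comp_toOrderHom] at h1
    simpa [hez] using h1
  let mι : (⟨image f.1⟩ : Delta0) ⟶ o' := ⟨image.ι f.1, hmz⟩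
  have hfem : f = e ≫ mι := hom_ext (image.fac f.1).symm
  have hiso : IsIso e.1 := by
    by_contra hno
    refine hx _ e inferInstance hno (Y.map mι.op w) ?_
    rw [h, ← FunctorToTypes.map_comp_apply, ← op_comp, ← hfem]
  rw [hfem]
  show Mono (e.1 ≫ mι.1)
  haveI := hiso
  haveI : Mono mι.1 := inferInstanceAs (Mono (image.ι f.1))
  apply mono_comp

lemma not_nd {o : Delta0} {x : Y.obj (op o)} (hx : ¬ IsND Y x) :
    ∃ (o' : Delta0) (e : o ⟶ o') (w : Y.obj (op o')),
      Epi e.1 ∧ ¬ IsIso e.1 ∧ x = Y.map e.op w := by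
  unfold IsND at hx
  push_neg at hx
  obtain ⟨o', e, he, hni, w, hw⟩ := hx
  exact ⟨o', e, w, he, hni, hw⟩

lemma ez_exists (N : ℕ) : ∀ (o : Delta0), o.toObj.len ≤ N → ∀ x : Y.obj (op o),
    ∃ (o' : Delta0) (e : o ⟶ o') (w : Y.obj (op o')),
      Epi e.1 ∧ IsND Y w ∧ x = Y.map e.op w := by
  induction N with
  | zero =>
    intro o ho x
    by_cases hx : IsND Y x
    · exact ⟨o, 𝟙 o, x, inferInstanceAs (Epi (𝟙 o.toObj)), hx, by simp⟩
    · obtain ⟨o', e, w, he, hni, hw⟩ := not_nd Y hx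
      have := len_lt_of_epi_not_iso e.1 he hni
      omega
  | succ N ih =>
    intro o ho x
    by_cases hx : IsND Y x
    · exact ⟨o, 𝟙 o, x, inferInstanceAs (Epi (𝟙 o.toObj)), hx, by simp⟩
    · obtain ⟨o', e, w, he, hni, hw⟩ := not_nd Y hx
      have hlt := len_lt_of_epi_not_iso e.1 he hni
      obtain ⟨o'', e', w', he', hnd, hw'⟩ := ih o' (by omega) w
      refine ⟨o'', e ≫ e', w', ?_, hnd, ?_⟩
      · haveI := he; haveI := he'
        exact inferInstanceAs (Epi (e.1 ≫ e'.1))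
      · rw [hw, hw', op_comp, FunctorToTypes.map_comp_apply]

lemma ez_unique {nn k l : Delta0} (α : nn ⟶ k) (β : nn ⟶ l) (hα : Epi α.1) (hβ : Epi β.1)
    {x : Y.obj (op k)} {y : Y.obj (op l)} (hx : IsND Y x) (hy : IsND Y y)
    (h : Y.map α.op x = Y.map β.op y) : ∃ _ : k = l, HEq α β ∧ HEq x y := by
  have hαs : Function.Surjective α.1.toOrderHom := SimplexCategory.epi_iff_surjective.mp hα
  have hβs : Function.Surjective β.1.toOrderHom := SimplexCategory.epi_iff_surjective.mp hβ
  have hyx : y = Y.map (sec β hβs ≫ α).op x := by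
    have h1 : y = Y.map (sec β hβs).op (Y.map β.op y) := by
      rw [← FunctorToTypes.map_comp_apply, ← op_comp, sec_comp, op_id, FunctorToTypes.map_id_apply]
    rw [h1, ← h, ← FunctorToTypes.map_comp_apply, ← op_comp]
  have hxy : x = Y.map (sec α hαs ≫ β).op y := by
    have h1 : x = Y.map (sec α hαs).op (Y.map α.op x) := by
      rw [← FunctorToTypes.map_comp_apply, ← op_comp, sec_comp, op_id, FunctorToTypes.map_id_apply]
    rw [h1, h, ← FunctorToTypes.map_comp_apply, ← op_comp]
  have hm1 : Mono (sec β hβs ≫ α).1 := mono_of_nd Y hy _ hyx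
  have hm2 : Mono (sec α hαs ≫ β).1 := mono_of_nd Y hx _ hxy
  have hkl : k = l := delta0_ext (SimplexCategory.ext
    (le_antisymm (@SimplexCategory.len_le_of_mono _ _ _ hm2) (@SimplexCategory.len_le_of_mono _ _ _ hm1)))
  subst hkl
  have hid1 : sec β hβs ≫ α = 𝟙 k := hom_ext (by
    haveI := hm1; exact SimplexCategory.eq_id_of_mono _)
  have hxy' : y = x := by rw [hyx, hid1, op_id, FunctorToTypes.map_id_apply]
  subst hxy'
  refine ⟨rfl, heq_of_eq ?_, HEq.rfl⟩
  apply hom_ext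
  apply SimplexCategory.Hom.ext'
  apply OrderHom.ext
  funext i
  by_cases hβ0 : β.1.toOrderHom i = 0
  · by_cases hα0 : α.1.toOrderHom i = 0
    · rw [hα0, hβ0]
    · have hx2 : y = Y.map (secThru α hαs i hα0 ≫ β).op y := by
        have h1 : y = Y.map (secThru α hαs i hα0).op (Y.map α.op y) := by
          rw [← FunctorToTypes.map_comp_apply, ← op_comp, secThru_comp, op_id,
            FunctorToTypes.map_id_apply]
        conv_lhs => rw [h1]
        rw [h, ← FunctorToTypes.map_comp_apply, ← op_comp]
      have hm := mono_of_nd Y hx _ hx2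
      have hid : secThru α hαs i hα0 ≫ β = 𝟙 k := hom_ext (by
        haveI := hm; exact SimplexCategory.eq_id_of_mono _)
      have h6 := congrArg (fun g : k ⟶ k => g.1.toOrderHom (α.1.toOrderHom i)) hid
      simp only [comp_val, SimplexCategory.comp_toOrderHom, OrderHom.comp_coe,
        Function.comp_apply, id_val, SimplexCategory.id_toOrderHom, OrderHom.id_coe, id_eq] at h6
      rw [secThru_at] at h6
      exact h6.symm
  · have hx2 : y = Y.map (secThru β hβs i hβ0 ≫ α).op y := by
      have h1 : y = Y.map (secThru β hβs i hβ0).op (Y.map β.op y) := by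
        rw [← FunctorToTypes.map_comp_apply, ← op_comp, secThru_comp, op_id,
          FunctorToTypes.map_id_apply]
      conv_lhs => rw [h1]
      rw [← h, ← FunctorToTypes.map_comp_apply, ← op_comp]
    have hm := mono_of_nd Y hx _ hx2
    have hid : secThru β hβs i hβ0 ≫ α = 𝟙 k := hom_ext (by
      haveI := hm; exact SimplexCategory.eq_id_of_mono _)
    have h6 := congrArg (fun g : k ⟶ k => g.1.toOrderHom (β.1.toOrderHom i)) hid
    simp only [comp_val, SimplexCategory.comp_toOrderHom, OrderHom.comp_coe,
      Function.comp_apply, id_val, SimplexCategory.id_toOrderHom, OrderHom.id_coe, id_eq] at h6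
    rw [secThru_at] at h6
    exact h6

end Presheaf

lemma li_ext {n : Delta0} {c d : LatchingIndex n} (h1 : c.k = d.k) (h2 : HEq c.π d.π) : c = d := by
  cases c with | mk ck cπ ce cni =>
  cases d with | mk dk dπ de dni =>
  dsimp at h1 h2
  subst h1
  have h3 := eq_of_heq h2
  subst h3
  rfl

end EZAux


/-- For every functor `X : Δ₀ᵒᵖ ⥤ SSet` and every `n`, the `n`-th latching map
`Lₙ(X) ⟶ X [n]` is a monomorphism of simplicial sets; in particular (since the
cofibrations of the Kan–Quillen model structure are exactly the monomorphisms) every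
`Δ₀ᵒᵖ`-shaped diagram of simplicial sets is Reedy cofibrant. -/
theorem latchingMap_mono (X : Delta0ᵒᵖ ⥤ SSet) (n : Delta0) :
    Mono (colimit.desc (latchingDiagram X n) (latchingCocone X n)) := by
  suffices h : ∀ (m : SimplexCategoryᵒᵖ),
      Mono ((colimit.desc (latchingDiagram X n) (latchingCocone X n)).app m) by
    haveI := h
    exact NatTrans.mono_of_mono_app _
  intro m
  rw [CategoryTheory.mono_iff_injective]
  intro u1 u2 hu
  let D := latchingDiagram X n
  let Y : Delta0ᵒᵖ ⥤ Type _ := X ⋙ (evaluation SimplexCategoryᵒᵖ (Type _)).obj m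
  have hc := isColimitOfPreserves ((evaluation SimplexCategoryᵒᵖ (Type _)).obj m)
    (colimit.isColimit D)
  obtain ⟨a, x, rfl⟩ := Types.jointly_surjective _ hc u1
  obtain ⟨b, y, rfl⟩ := Types.jointly_surjective _ hc u2
  have hdesc : ∀ (j : LatchingIndex n) (z : Y.obj (op j.k)),
      (colimit.desc D (latchingCocone X n)).app m ((colimit.ι D j).app m z) =
        Y.map j.π.op z := fun j z =>
    by have := ConcreteCategory.congr_hom (NatTrans.congr_app (colimit.ι_desc (latchingCocone X n) j) m) z; exact this
  have hu' : Y.map a.π.op x = Y.map b.π.op y := by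
    rw [← hdesc a x, ← hdesc b y]
    exact hu
  obtain ⟨o1, e1, w1, he1, hnd1, hw1⟩ := EZAux.ez_exists Y a.k.toObj.len a.k le_rfl x
  obtain ⟨o2, e2, w2, he2, hnd2, hw2⟩ := EZAux.ez_exists Y b.k.toObj.len b.k le_rfl y
  have hlena := EZAux.len_lt_of_epi_not_iso a.π.1 a.epi a.not_identity
  have hepi1 : Epi (a.π ≫ e1).1 := by
    haveI := a.epi; haveI := he1
    exact inferInstanceAs (Epi (a.π.1 ≫ e1.1))
  have hepi2 : Epi (b.π ≫ e2).1 := by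
    haveI := b.epi; haveI := he2
    exact inferInstanceAs (Epi (b.π.1 ≫ e2.1))
  let a' : LatchingIndex n := ⟨o1, a.π ≫ e1, hepi1, by
    intro hiso
    have h1 : n.toObj.len ≤ o1.toObj.len := @SimplexCategory.len_le_of_mono _ _ (a.π ≫ e1).1
      (by haveI := hiso; exact inferInstanceAs (Mono ((a.π ≫ e1).1)))
    have h2 : o1.toObj.len ≤ a.k.toObj.len := @SimplexCategory.len_le_of_epi _ _ _ he1
    omega⟩
  let f1 : a' ⟶ a := ⟨e1, rfl, he1⟩
  have key1 : (colimit.ι D a').app m w1 = (colimit.ι D a).app m x := by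
    have h3 := ConcreteCategory.congr_hom (NatTrans.congr_app (colimit.w D f1) m) w1
    rw [← h3, hw1]
    rfl
  have hu'' : Y.map (a.π ≫ e1).op w1 = Y.map (b.π ≫ e2).op w2 := by
    rw [op_comp, op_comp, FunctorToTypes.map_comp_apply, FunctorToTypes.map_comp_apply,
      ← hw1, ← hw2]
    exact hu'
  obtain ⟨hkl, hπ, hww⟩ := EZAux.ez_unique Y (a.π ≫ e1) (b.π ≫ e2) hepi1 hepi2 hnd1 hnd2 hu''
  obtain rfl : o1 = o2 := hkl
  obtain rfl : w1 = w2 := eq_of_heq hww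
  have hππ : a.π ≫ e1 = b.π ≫ e2 := eq_of_heq hπ
  let g : a' ⟶ b := ⟨e2, hππ.symm, he2⟩
  have key2 : (colimit.ι D a').app m w1 = (colimit.ι D b).app m y := by
    have h3 := ConcreteCategory.congr_hom (NatTrans.congr_app (colimit.w D g) m) w1
    rw [← h3, hw2]
    rfl
  show (colimit.ι D a).app m x = (colimit.ι D b).app m y
  rw [← key1, ← key2]
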